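/- Closed form of the maximum moment restriction: define 𝕄(θ) := sup_{‖f‖_{F^q} ≤ 1} E[ψ(Z;θ)ᵀf(X)]. If E[h_θ((X,Z),(X,Z))] < ∞ where h_θ((x,z),(x',z')) = ψ(z;θ)ᵀψ(z';θ)k(x,x'), then 𝕄(θ)² = E[h_θ((X,Z),(X',Z'))], where (X',Z') is an independent copy of (X,Z). -/

import Mathlib

open MeasureTheory
open scoped BigOperators InnerProductSpace


lemma sup_inner_unitBall {E : Type*} [NormedAddCommGroup E] [InnerProductSpace ℝ E]
    (μ : E) : sSup {y : ℝ | ∃ f : E, ‖f‖ ≤ 1 ∧ y = ⟪f, μ⟫_ℝ} = ‖μ‖ := by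
  apply IsGreatest.csSup_eq
  constructor
  · by_cases hμ0 : μ = 0
    · exact ⟨0, by simp, by simp [hμ0]⟩
    · refine ⟨‖μ‖⁻¹ • μ, ?_, ?_⟩
      · rw [norm_smul, norm_inv, norm_norm, inv_mul_cancel₀ (norm_ne_zero_iff.2 hμ0)]
      · rw [real_inner_smul_left, real_inner_self_eq_norm_sq]
        field_simp [norm_ne_zero_iff.2 hμ0]
  · rintro y ⟨f, hf, rfl⟩
    calc ⟪f, μ⟫_ℝ ≤ ‖f‖ * ‖μ‖ := real_inner_le_norm f μ
      _ ≤ 1 * ‖μ‖ := by gcongr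
      _ = ‖μ‖ := one_mul _

lemma inner_integral_self {α : Type*} [MeasurableSpace α] (ν : Measure α) [SFinite ν]
    {E : Type*} [NormedAddCommGroup E] [InnerProductSpace ℝ E] [CompleteSpace E]
    (ξ : α → E) (hξ : Integrable ξ ν) :
    ⟪∫ a, ξ a ∂ν, ∫ a, ξ a ∂ν⟫_ℝ = ∫ p, ⟪ξ p.1, ξ p.2⟫_ℝ ∂(ν.prod ν) := by
  have hmeasξ : AEStronglyMeasurable (fun p : α × α => ⟪ξ p.1, ξ p.2⟫_ℝ) (ν.prod ν) :=
    (hξ.aestronglyMeasurable.comp_fst).inner (hξ.aestronglyMeasurable.comp_snd)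
  have hintprod : Integrable (fun p : α × α => ⟪ξ p.1, ξ p.2⟫_ℝ) (ν.prod ν) := by
    refine Integrable.mono (hξ.norm.mul_prod hξ.norm) hmeasξ
      (Filter.Eventually.of_forall fun p => ?_)
    calc ‖⟪ξ p.1, ξ p.2⟫_ℝ‖ ≤ ‖ξ p.1‖ * ‖ξ p.2‖ := norm_inner_le_norm _ _
      _ ≤ ‖‖ξ p.1‖ * ‖ξ p.2‖‖ := le_abs_self _
  calc ⟪∫ a, ξ a ∂ν, ∫ a, ξ a ∂ν⟫_ℝ
      = ∫ a, ⟪(∫ a', ξ a' ∂ν), ξ a⟫_ℝ ∂ν := (integral_inner hξ _).symm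
    _ = ∫ a, ∫ a', ⟪ξ a, ξ a'⟫_ℝ ∂ν ∂ν := by
        refine integral_congr_ae (Filter.Eventually.of_forall fun a => ?_)
        show ⟪∫ a', ξ a' ∂ν, ξ a⟫_ℝ = ∫ a', ⟪ξ a, ξ a'⟫_ℝ ∂ν
        rw [real_inner_comm]
        exact (integral_inner hξ (ξ a)).symm
    _ = ∫ p, ⟪ξ p.1, ξ p.2⟫_ℝ ∂(ν.prod ν) := (integral_prod _ hintprod).symm

def piLpSingle {q : ℕ} {H : Type*} [NormedAddCommGroup H] (i : Fin q) (v : H) :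
    PiLp 2 fun _ : Fin q => H :=
  WithLp.toLp 2 (fun j => if j = i then v else 0)

lemma single_inner_piLp {q : ℕ} {H : Type*} [NormedAddCommGroup H] [InnerProductSpace ℝ H]
    (i : Fin q) (v : H) (g : PiLp 2 fun _ : Fin q => H) :
    ⟪piLpSingle i v, g⟫_ℝ = ⟪v, g i⟫_ℝ := by
  rw [PiLp.inner_apply]
  rw [Finset.sum_eq_single_of_mem i (Finset.mem_univ i)]
  · simp [piLpSingle]
  · intro j _ hj
    simp [piLpSingle, hj]

/-- Closed form of the maximum moment restriction: define
`𝕄(θ) = sup_{‖f‖_{F^q} ≤ 1} E[ψ(Z;θ)ᵀ f(X)]`.  If `E[h_θ((X,Z),(X,Z))] < ∞` for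
`h_θ((x,z),(x',z')) = ψ(z;θ)ᵀψ(z';θ)k(x,x')`, then
`𝕄(θ)² = E[h_θ((X,Z),(X',Z'))]` with `(X',Z')` an independent copy of `(X,Z)`.
The RKHS of `k` is realized by a feature map `Φ` with `k(x,x') = ⟪Φ x, Φ x'⟫`. -/
theorem stmt10 {Ω 𝓧 H : Type*} [MeasurableSpace Ω] [MeasurableSpace 𝓧]
    [NormedAddCommGroup H] [InnerProductSpace ℝ H] [CompleteSpace H]
    (P : Measure Ω) [IsProbabilityMeasure P] (q : ℕ)
    (X : Ω → 𝓧) (hX : Measurable X)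
    (Φ : 𝓧 → H) (hΦmeas : AEStronglyMeasurable (fun ω => Φ (X ω)) P)
    (k : 𝓧 → 𝓧 → ℝ) (hk : ∀ x x', k x x' = ⟪Φ x, Φ x'⟫_ℝ)
    (ψ : Ω → Fin q → ℝ) (hψmeas : ∀ i, Measurable fun ω => ψ ω i)
    (hξint : Integrable
      (fun ω => (WithLp.toLp 2 (fun i => ψ ω i • Φ (X ω)) : PiLp 2 fun _ : Fin q => H)) P)
    (hhdiag : Integrable (fun ω => (∑ i : Fin q, ψ ω i * ψ ω i) * k (X ω) (X ω)) P) :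
    (sSup {y : ℝ | ∃ f : PiLp 2 fun _ : Fin q => H, ‖f‖ ≤ 1 ∧
        y = ∑ i : Fin q, ∫ ω, ψ ω i * ⟪f i, Φ (X ω)⟫_ℝ ∂P}) ^ 2 =
      ∫ p, (∑ i : Fin q, ψ p.1 i * ψ p.2 i) * k (X p.1) (X p.2) ∂(P.prod P) := by
  classical
  set ξ : Ω → PiLp 2 fun _ : Fin q => H := fun ω => WithLp.toLp 2 (fun i => ψ ω i • Φ (X ω)) with hξ
  haveI : CompleteSpace (PiLp 2 fun _ : Fin q => H) :=
    inferInstance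
  have hξint2 : Integrable ξ P :=
    hξint
  have hcomp : ∀ (f : PiLp 2 fun _ : Fin q => H) (i : Fin q),
      (∫ ω, ψ ω i * ⟪f i, Φ (X ω)⟫_ℝ ∂P) = ⟪f i, (∫ ω, ξ ω ∂P) i⟫_ℝ := by
    intro f i
    have hci := integral_inner (𝕜 := ℝ) hξint2 (piLpSingle i (f i))
    rw [single_inner_piLp] at hci
    rw [← hci]
    refine integral_congr_ae (Filter.Eventually.of_forall fun ω => ?_)
    show ψ ω i * ⟪f i, Φ (X ω)⟫_ℝ = ⟪piLpSingle i (f i), ξ ω⟫_ℝ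
    rw [single_inner_piLp]
    simp [hξ, real_inner_smul_right]
  have hset : {y : ℝ | ∃ f : PiLp 2 fun _ : Fin q => H, ‖f‖ ≤ 1 ∧
      y = ∑ i : Fin q, ∫ ω, ψ ω i * ⟪f i, Φ (X ω)⟫_ℝ ∂P}
      = {y : ℝ | ∃ f : PiLp 2 fun _ : Fin q => H, ‖f‖ ≤ 1 ∧ y = ⟪f, ∫ ω, ξ ω ∂P⟫_ℝ} := by
    ext y
    constructor
    · rintro ⟨f, hf, rfl⟩
      refine ⟨f, hf, ?_⟩
      rw [PiLp.inner_apply]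
      exact Finset.sum_congr rfl fun i _ => hcomp f i
    · rintro ⟨f, hf, rfl⟩
      refine ⟨f, hf, ?_⟩
      rw [PiLp.inner_apply]
      exact (Finset.sum_congr rfl fun i _ => hcomp f i).symm
  rw [hset, sup_inner_unitBall]
  rw [← real_inner_self_eq_norm_sq, inner_integral_self P ξ hξint2]
  refine integral_congr_ae (Filter.Eventually.of_forall fun p => ?_)
  show ⟪ξ p.1, ξ p.2⟫_ℝ = (∑ i : Fin q, ψ p.1 i * ψ p.2 i) * k (X p.1) (X p.2)
  rw [PiLp.inner_apply, Finset.sum_mul]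
  refine Finset.sum_congr rfl fun i _ => ?_
  show ⟪ψ p.1 i • Φ (X p.1), ψ p.2 i • Φ (X p.2)⟫_ℝ = _
  rw [hk, real_inner_smul_left, real_inner_smul_right]
  ring
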